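/- arXiv:1803.07239 — 2 statements merged into one kernel-verified Lean document; each statement's English description precedes it below -/
import Mathlib

section
/- Let H be a finite dimensional Hopf algebra. The element R_{(α,β),(γ,δ)} = Σᵢ (ε ⋈ β⁻¹(eᵢ)) ⊗ (eⁱ ⋈ 1) satisfies (id ⊗ Δ_{(γ,δ),(μ,ν)})(R_{(α,β),(γ,δ)*(μ,ν)}) = (R_{(α,β),(μ,ν)})₁₃ (R_{(α,β),(γ,δ)})₁₂ as elements of (H* ⋈ H_(α,β)) ⊗ (H* ⋈ H_(γ,δ)) ⊗ (H* ⋈ H_(μ,ν)). -/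
open TensorProduct LinearMap

noncomputable section

namespace DCP

variable (K : Type) {H : Type} [Field K] [Ring H] [HopfAlgebra K H]

/-- A Hopf algebra automorphism: a linear equivalence that is an algebra morphism and a
coalgebra morphism. -/
def IsHopfAut (f : H ≃ₗ[K] H) : Prop :=
  (∀ x y : H, f (x * y) = f x * f y) ∧ f 1 = 1 ∧
    (Coalgebra.comul ∘ₗ f.toLinearMap
      = TensorProduct.map f.toLinearMap f.toLinearMap ∘ₗ Coalgebra.comul) ∧
    (Coalgebra.counit ∘ₗ f.toLinearMap = (Coalgebra.counit : H →ₗ[K] K))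

/-- The convolution product on the dual of `H`, as a bilinear map. -/
def convMul : Module.Dual K H →ₗ[K] Module.Dual K H →ₗ[K] Module.Dual K H :=
  (TensorProduct.mapBilinear (RingHom.id K) H H K K).compr₂
    ((LinearMap.lcomp K K (Coalgebra.comul (R := K) (A := H))) ∘ₗ
      (LinearMap.llcomp K (H ⊗[K] H) (K ⊗[K] K) K (TensorProduct.lid K K).toLinearMap))

@[simp] lemma convMul_apply (p q : Module.Dual K H) (x : H) :
    convMul K p q x = (TensorProduct.lid K K).toLinearMap
      (TensorProduct.map p q (Coalgebra.comul x)) := rfl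

/-- The coproduct on the dual of a finite-dimensional Hopf algebra, dual to multiplication. -/
def dcomul [FiniteDimensional K H] :
    Module.Dual K H →ₗ[K] Module.Dual K H ⊗[K] Module.Dual K H :=
  (TensorProduct.dualDistribEquiv K H H).symm.toLinearMap ∘ₗ (LinearMap.mul' K H).dualMap

/-- The iterated comultiplication `h ↦ h₁ ⊗ (h₂ ⊗ h₃)`. -/
def comul2 : H →ₗ[K] H ⊗[K] (H ⊗[K] H) :=
  (LinearMap.lTensor H (Coalgebra.comul (R := K))) ∘ₗ Coalgebra.comul

/-- Lift a trilinear map to the triple tensor product `H ⊗ (H ⊗ H)`. -/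
def lift3 {W : Type} [AddCommMonoid W] [Module K W]
    (Φ : H →ₗ[K] H →ₗ[K] H →ₗ[K] W) : H ⊗[K] (H ⊗[K] H) →ₗ[K] W :=
  TensorProduct.lift ((TensorProduct.lift.equiv (RingHom.id K) H H W).toLinearMap ∘ₗ Φ)

variable {K}

/-- auxiliary linear map `h₃ ↦ F (p ∘ mulLeft (u h₃) ∘ mulRight (v h₁)) ⊗ g h₂`. -/
def inner3 (u : H →ₗ[K] H) (F : Module.Dual K H →ₗ[K] Module.Dual K H)
    (p : Module.Dual K H) (a g2 : H) : H →ₗ[K] Module.Dual K H ⊗[K] H :=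
  ((TensorProduct.mk K (Module.Dual K H) H).flip g2) ∘ₗ F ∘ₗ
    (LinearMap.llcomp K H H K p) ∘ₗ
    ((LinearMap.llcomp K H H H).flip (LinearMap.mulRight K a)) ∘ₗ
    ((LinearMap.mul K H) ∘ₗ u)

@[simp] lemma inner3_apply (u : H →ₗ[K] H) (F : Module.Dual K H →ₗ[K] Module.Dual K H)
    (p : Module.Dual K H) (a g2 h₃ : H) :
    inner3 u F p a g2 h₃
      = F (p ∘ₗ LinearMap.mulLeft K (u h₃) ∘ₗ LinearMap.mulRight K a) ⊗ₜ[K] g2 := by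
  rfl

variable (K)

/-- The curried trilinear map
`(h₁, h₂, h₃) ↦ F (p ∘ mulLeft (u h₃) ∘ mulRight (v h₁)) ⊗ g h₂`. -/
def coreTri (u v : H →ₗ[K] H) (F : Module.Dual K H →ₗ[K] Module.Dual K H)
    (g : H →ₗ[K] H) (p : Module.Dual K H) :
    H →ₗ[K] H →ₗ[K] H →ₗ[K] Module.Dual K H ⊗[K] H :=
  LinearMap.mk₂ K (fun h₁ h₂ => inner3 u F p (v h₁) (g h₂))
    (fun m m' n => by
      have hR : ∀ a b : H, LinearMap.mulRight K (a + b)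
          = LinearMap.mulRight K a + LinearMap.mulRight K b := by
        intro a b; ext x; simp [mul_add]
      ext h₃
      simp [hR, LinearMap.comp_add, LinearMap.add_comp, map_add, add_tmul])
    (fun c m n => by
      have hR : ∀ a : H, LinearMap.mulRight K ((c : K) • a)
          = c • LinearMap.mulRight K a := by
        intro a; ext x; simp [mul_smul_comm]
      ext h₃
      simp [hR, LinearMap.comp_smul, LinearMap.smul_comp, map_smul, smul_tmul'])
    (fun m n n' => by
      ext h₃
      simp [map_add, tmul_add])
    (fun c m n => by
      ext h₃
      simp [map_smul, tmul_smul])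

/-- The diagonal crossed product of pure tensors:
`(p ⋈ h)(q ⋈ l) = Σ p (α(h₁) ▶ q ◀ S⁻¹β(h₃)) ⋈ h₂ l`. -/
def dprod (α β Sinv : H →ₗ[K] H) (p : Module.Dual K H) (h : H)
    (q : Module.Dual K H) (l : H) : Module.Dual K H ⊗[K] H :=
  lift3 K (coreTri K (Sinv ∘ₗ β) α (convMul K p) (LinearMap.mulRight K l) q) (comul2 K h)

/-- The value of the antipode of the diagonal crossed product on a pure tensor. -/
def smapVal (α β Sinv : H →ₗ[K] H) (p : Module.Dual K H) (h : H) :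
    Module.Dual K H ⊗[K] H :=
  lift3 K (coreTri K (Sinv ∘ₗ β ∘ₗ HopfAlgebra.antipode (R := K))
      (Sinv ∘ₗ α) Sinv.dualMap
      (α ∘ₗ β ∘ₗ HopfAlgebra.antipode (R := K)) p) (comul2 K h)

/-- Componentwise product on a tensor product of two (nonunital) algebras given by
bilinear multiplications. -/
def tmul₂ {A B : Type} [AddCommMonoid A] [Module K A] [AddCommMonoid B] [Module K B]
    (M1 : A →ₗ[K] A →ₗ[K] A) (M2 : B →ₗ[K] B →ₗ[K] B) :
    A ⊗[K] B →ₗ[K] A ⊗[K] B →ₗ[K] A ⊗[K] B :=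
  (TensorProduct.homTensorHomMap (RingHom.id K) A B A B) ∘ₗ (TensorProduct.map M1 M2)

/-- The comultiplication component `Δ_{(α,β),(γ,δ)}(p ⋈ h) = Σ (p₂ ⋈ c h₁) ⊗ (p₁ ⋈ e h₂)`
(with `c = γ`, `e = γ⁻¹βγ`). -/
def deltaComp [FiniteDimensional K H] (c e : H →ₗ[K] H) :
    Module.Dual K H ⊗[K] H →ₗ[K]
      (Module.Dual K H ⊗[K] H) ⊗[K] (Module.Dual K H ⊗[K] H) :=
  (TensorProduct.tensorTensorTensorComm K (Module.Dual K H) (Module.Dual K H) H H).toLinearMap ∘ₗ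
    TensorProduct.map
      ((TensorProduct.comm K (Module.Dual K H) (Module.Dual K H)).toLinearMap ∘ₗ dcomul K)
      (TensorProduct.map c e ∘ₗ Coalgebra.comul)

/-- The crossing map `ξ_(a,b)^(c,·)(p ⋈ h) = (p ∘ b a⁻¹) ⋈ a c⁻¹ b⁻¹ c (h)`. -/
def xiMap (a b c : H ≃ₗ[K] H) :
    Module.Dual K H ⊗[K] H →ₗ[K] Module.Dual K H ⊗[K] H :=
  TensorProduct.map ((b.toLinearMap ∘ₗ a.symm.toLinearMap).dualMap)
    (a.toLinearMap ∘ₗ c.symm.toLinearMap ∘ₗ b.symm.toLinearMap ∘ₗ c.toLinearMap)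

/-- Embedding of the dual into the crossed product, `p ↦ p ⋈ 1`. -/
def toD1 : Module.Dual K H →ₗ[K] Module.Dual K H ⊗[K] H :=
  (TensorProduct.mk K (Module.Dual K H) H).flip 1

/-- Embedding of `H` into the crossed product, `h ↦ ε ⋈ h`. -/
def toD2 : H →ₗ[K] Module.Dual K H ⊗[K] H :=
  TensorProduct.mk K (Module.Dual K H) H (Coalgebra.counit (R := K))

end DCP
namespace DCPAux
open DCP Coalgebra

variable {K H : Type} [Field K] [Ring H] [HopfAlgebra K H]

lemma sum_smul_counit {a : H} {ι : Type*} (re : Coalgebra.Repr K a ι) :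
    ∑ i ∈ re.index, Coalgebra.counit (R := K) (re.right i) • re.left i = a := by
  have h2 := congrArg (TensorProduct.rid K H) (Coalgebra.sum_tmul_counit_eq re)
  rw [map_sum] at h2
  simp only [TensorProduct.rid_tmul] at h2
  rwa [one_smul] at h2

lemma sum_counit_smul {a : H} {ι : Type*} (re : Coalgebra.Repr K a ι) :
    ∑ i ∈ re.index, Coalgebra.counit (R := K) (re.left i) • re.right i = a := by
  have h2 := congrArg (TensorProduct.lid K H) (Coalgebra.sum_counit_tmul_eq re)
  rw [map_sum] at h2
  simp only [TensorProduct.lid_tmul] at h2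
  rwa [one_smul] at h2

lemma counit_algebraMap' (c : K) :
    Coalgebra.counit (R := K) ((algebraMap K H) c) = c := by
  rw [Algebra.algebraMap_eq_smul_one, map_smul, Bialgebra.counit_one, smul_eq_mul, mul_one]

lemma counit_antipode (a : H) :
    Coalgebra.counit (R := K) (HopfAlgebra.antipode (R := K) a)
      = Coalgebra.counit (R := K) a := by
  set re := Coalgebra.Repr.arbitrary K a with hre
  have h1 : Coalgebra.counit (R := K)
      (HopfAlgebra.antipode (R := K) (∑ i ∈ re.index,
        Coalgebra.counit (R := K) (re.right i) • re.left i))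
      = Coalgebra.counit (R := K) a := by
    have h2 := congrArg (Coalgebra.counit (R := K)) (HopfAlgebra.sum_antipode_mul_eq_algebraMap_counit re)
    rw [map_sum, counit_algebraMap'] at h2
    rw [map_sum, map_sum]
    rw [← h2]
    refine Finset.sum_congr rfl fun i _ => ?_
    simp [Bialgebra.counit_mul, mul_comm]
  rwa [sum_smul_counit re] at h1

lemma antipode_one : HopfAlgebra.antipode (R := K) (1 : H) = 1 := by
  have := HopfAlgebra.mul_antipode_rTensor_comul_apply (R := K) (1 : H)
  simpa [Bialgebra.comul_one, Algebra.TensorProduct.one_def,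
    Algebra.algebraMap_eq_smul_one] using this

lemma convMul_counit_left (p : Module.Dual K H) :
    convMul K (Coalgebra.counit) p = p := by
  ext x
  set re := Coalgebra.Repr.arbitrary K x
  rw [convMul_apply, ← re.eq, map_sum, map_sum]
  have hc : ∀ i ∈ re.index, (TensorProduct.lid K K).toLinearMap
      ((TensorProduct.map (Coalgebra.counit (R := K)) p) (re.left i ⊗ₜ[K] re.right i))
      = p (Coalgebra.counit (R := K) (re.left i) • re.right i) := fun i _ => by simp
  rw [Finset.sum_congr rfl hc, ← map_sum, sum_counit_smul]

lemma convMul_counit_right (p : Module.Dual K H) :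
    convMul K p (Coalgebra.counit) = p := by
  ext x
  set re := Coalgebra.Repr.arbitrary K x
  rw [convMul_apply, ← re.eq, map_sum, map_sum]
  have hc : ∀ i ∈ re.index, (TensorProduct.lid K K).toLinearMap
      ((TensorProduct.map p (Coalgebra.counit (R := K))) (re.left i ⊗ₜ[K] re.right i))
      = p (Coalgebra.counit (R := K) (re.right i) • re.left i) := fun i _ => by simp [mul_comm]
  rw [Finset.sum_congr rfl hc, ← map_sum, sum_smul_counit]

end DCPAux
namespace DCPAux
open DCP Coalgebra

variable {K H : Type} [Field K] [Ring H] [HopfAlgebra K H]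

lemma lift3_tmul {W : Type} [AddCommMonoid W] [Module K W]
    (Φ : H →ₗ[K] H →ₗ[K] H →ₗ[K] W) (x y z : H) :
    lift3 K Φ (x ⊗ₜ[K] (y ⊗ₜ[K] z)) = Φ x y z := rfl

lemma coreTri_apply (u v : H →ₗ[K] H) (F : Module.Dual K H →ₗ[K] Module.Dual K H)
    (g : H →ₗ[K] H) (p : Module.Dual K H) (h₁ h₂ h₃ : H) :
    coreTri K u v F g p h₁ h₂ h₃
      = F (p ∘ₗ LinearMap.mulLeft K (u h₃) ∘ₗ LinearMap.mulRight K (v h₁)) ⊗ₜ[K] g h₂ := rfl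

lemma comul2_one : comul2 K (1 : H) = (1 : H) ⊗ₜ[K] ((1 : H) ⊗ₜ[K] (1 : H)) := by
  have : Coalgebra.comul (R := K) (1 : H) = (1 : H) ⊗ₜ[K] (1 : H) := by
    rw [Bialgebra.comul_one, Algebra.TensorProduct.one_def]
  rw [comul2, LinearMap.comp_apply, this, LinearMap.lTensor_tmul, this]

lemma comul2_eq (h : H) (r : Coalgebra.Repr K h (H × H)) (s : ∀ i : r.ι, Coalgebra.Repr K (r.right i) (H × H)) :
    comul2 K h = ∑ i ∈ r.index, ∑ j ∈ (s i).index,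
      r.left i ⊗ₜ[K] ((s i).left j ⊗ₜ[K] (s i).right j) := by
  rw [comul2, LinearMap.comp_apply, ← r.eq, map_sum]
  refine Finset.sum_congr rfl fun i _ => ?_
  rw [LinearMap.lTensor_tmul, ← (s i).eq, TensorProduct.tmul_sum]

lemma counit_mulLeft_mulRight (a c : H) :
    (Coalgebra.counit (R := K) ∘ₗ LinearMap.mulLeft K a ∘ₗ LinearMap.mulRight K c :
      Module.Dual K H)
      = (Coalgebra.counit (R := K) a * Coalgebra.counit (R := K) c) •
        (Coalgebra.counit (R := K) : Module.Dual K H) := by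
  ext x
  simp only [LinearMap.comp_apply, LinearMap.mulLeft_apply, LinearMap.mulRight_apply,
    LinearMap.smul_apply, smul_eq_mul, Bialgebra.counit_mul]
  ring

end DCPAux
namespace DCPAux
open DCP Coalgebra

variable {K H : Type} [Field K] [Ring H] [HopfAlgebra K H]

lemma dprodB (γ δ : H ≃ₗ[K] H) (Sinv : H →ₗ[K] H)
    (hS1 : Sinv ∘ₗ HopfAlgebra.antipode (R := K) (A := H) = LinearMap.id)
    (hδ1 : δ 1 = 1) (hγ1 : γ 1 = 1) (q : Module.Dual K H) :
    dprod K γ.toLinearMap δ.toLinearMap Sinv Coalgebra.counit 1 q 1 = q ⊗ₜ[K] (1 : H) := by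
  have hSinv1 : Sinv (1 : H) = 1 := by
    have h2 := LinearMap.congr_fun hS1 (1 : H)
    rwa [LinearMap.comp_apply, LinearMap.id_apply, antipode_one] at h2
  rw [dprod, comul2_one, lift3_tmul, coreTri_apply]
  simp only [LinearMap.comp_apply, LinearEquiv.coe_coe, hδ1, hSinv1, hγ1,
    LinearMap.mulLeft_one, LinearMap.mulRight_one, LinearMap.comp_id, LinearMap.id_comp,
    LinearMap.mulRight_apply, one_mul, mul_one, LinearMap.id_coe, id_eq]
  rw [convMul_counit_left]

lemma dprodC (μ ν : H ≃ₗ[K] H) (Sinv : H →ₗ[K] H)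
    (hS1 : Sinv ∘ₗ HopfAlgebra.antipode (R := K) (A := H) = LinearMap.id)
    (hν1 : ν 1 = 1) (hμ1 : μ 1 = 1) (p : Module.Dual K H) :
    dprod K μ.toLinearMap ν.toLinearMap Sinv p 1 Coalgebra.counit 1 = p ⊗ₜ[K] (1 : H) := by
  have hSinv1 : Sinv (1 : H) = 1 := by
    have h2 := LinearMap.congr_fun hS1 (1 : H)
    rwa [LinearMap.comp_apply, LinearMap.id_apply, antipode_one] at h2
  rw [dprod, comul2_one, lift3_tmul, coreTri_apply]
  simp only [LinearMap.comp_apply, LinearEquiv.coe_coe, hν1, hSinv1, hμ1,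
    LinearMap.mulLeft_one, LinearMap.mulRight_one, LinearMap.comp_id, LinearMap.id_comp,
    LinearMap.mulRight_apply, one_mul, mul_one, LinearMap.id_coe, id_eq]
  rw [convMul_counit_right]

lemma dprodA (α β : H ≃ₗ[K] H) (Sinv : H →ₗ[K] H)
    (hS2 : HopfAlgebra.antipode (R := K) (A := H) ∘ₗ Sinv = LinearMap.id)
    (hεα : Coalgebra.counit ∘ₗ α.toLinearMap = (Coalgebra.counit : H →ₗ[K] K))
    (hεβ : Coalgebra.counit ∘ₗ β.toLinearMap = (Coalgebra.counit : H →ₗ[K] K))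
    (h l : H) :
    dprod K α.toLinearMap β.toLinearMap Sinv Coalgebra.counit h Coalgebra.counit l
      = (Coalgebra.counit : Module.Dual K H) ⊗ₜ[K] (h * l) := by
  have hS : ∀ x : H, Coalgebra.counit (R := K) (Sinv x) = Coalgebra.counit (R := K) x := by
    intro x
    have h2 := LinearMap.congr_fun hS2 x
    rw [LinearMap.comp_apply, LinearMap.id_apply] at h2
    rw [← counit_antipode (K := K) (Sinv x), h2]
  have hα' : ∀ x : H, Coalgebra.counit (R := K) (α x) = Coalgebra.counit (R := K) x :=
    fun x => LinearMap.congr_fun hεα x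
  have hβ' : ∀ x : H, Coalgebra.counit (R := K) (β x) = Coalgebra.counit (R := K) x :=
    fun x => LinearMap.congr_fun hεβ x
  set r := Coalgebra.Repr.arbitrary K h with hr
  set s : (i : r.ι) → Coalgebra.Repr K (r.right i) (H × H) := fun i => Coalgebra.Repr.arbitrary K (r.right i) with hs
  rw [dprod, comul2_eq h r s]
  simp only [map_sum, lift3_tmul, coreTri_apply, LinearMap.comp_apply, LinearEquiv.coe_coe,
    LinearMap.mulRight_apply, counit_mulLeft_mulRight, map_smul, convMul_counit_left,
    hS, hβ', hα']
  -- now: ∑ i ∑ j, (ε (s i).right j * ε (r.left i)) • (ε ⊗ₜ ((s i).left j * l)) = ε ⊗ₜ (h * l)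
  simp only [TensorProduct.smul_tmul, ← TensorProduct.tmul_sum]
  congr 1
  have inner : ∀ i ∈ r.index,
      ∑ j ∈ (s i).index,
        (Coalgebra.counit (R := K) ((s i).right j) * Coalgebra.counit (R := K) (r.left i)) •
          ((s i).left j * l)
      = Coalgebra.counit (R := K) (r.left i) • (r.right i * l) := by
    intro i _
    have step : ∀ j ∈ (s i).index,
        (Coalgebra.counit (R := K) ((s i).right j) * Coalgebra.counit (R := K) (r.left i)) •
          ((s i).left j * l)
        = Coalgebra.counit (R := K) (r.left i) •
            ((Coalgebra.counit (R := K) ((s i).right j) • (s i).left j) * l) := by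
      intro j _
      rw [smul_mul_assoc, mul_comm, mul_smul]
    rw [Finset.sum_congr rfl step, ← Finset.smul_sum, ← Finset.sum_mul, sum_smul_counit]
  rw [Finset.sum_congr rfl inner]
  have step2 : ∀ i ∈ r.index,
      Coalgebra.counit (R := K) (r.left i) • (r.right i * l)
      = (Coalgebra.counit (R := K) (r.left i) • r.right i) * l := by
    intro i _
    rw [smul_mul_assoc]
  rw [Finset.sum_congr rfl step2, ← Finset.sum_mul, sum_counit_smul]

end DCPAux
namespace DCPAux
open DCP Coalgebra

variable {K H : Type} [Field K] [Ring H] [HopfAlgebra K H]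

lemma dcomul_eq [FiniteDimensional K H] {ι : Type} [Fintype ι] [DecidableEq ι]
    (b : Module.Basis ι K H) (p : Module.Dual K H) :
    dcomul K p = ∑ j, ∑ k, p (b j * b k) • (b.coord j ⊗ₜ[K] b.coord k) := by
  rw [dcomul, LinearMap.comp_apply, LinearEquiv.coe_coe, LinearEquiv.symm_apply_eq]
  refine TensorProduct.ext' fun x y => ?_
  have he : ∀ (t : Module.Dual K H ⊗[K] Module.Dual K H),
      (TensorProduct.dualDistribEquiv K H H) t = TensorProduct.dualDistrib K H H t :=
    fun t => rfl
  simp only [map_sum, map_smul, he, LinearMap.dualMap_apply, LinearMap.mul'_apply,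
    LinearMap.coe_sum, Finset.sum_apply, LinearMap.smul_apply,
    TensorProduct.dualDistrib_apply, smul_eq_mul, Module.Basis.coord_apply]
  conv_lhs => rw [← b.sum_repr x, ← b.sum_repr y]
  rw [Finset.sum_mul]
  rw [map_sum]
  refine Finset.sum_congr rfl fun j _ => ?_
  rw [Finset.mul_sum, map_sum]
  refine Finset.sum_congr rfl fun k _ => ?_
  rw [smul_mul_smul_comm, map_smul, smul_eq_mul]
  ring

end DCPAux
namespace DCPAux
open DCP Coalgebra

variable {K H : Type} [Field K] [Ring H] [HopfAlgebra K H]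

lemma tmul₂_tmul {A B : Type} [AddCommMonoid A] [Module K A] [AddCommMonoid B] [Module K B]
    (M1 : A →ₗ[K] A →ₗ[K] A) (M2 : B →ₗ[K] B →ₗ[K] B) (x x' : A) (y y' : B) :
    tmul₂ K M1 M2 (x ⊗ₜ[K] y) (x' ⊗ₜ[K] y') = M1 x x' ⊗ₜ[K] M2 y y' := by
  rw [tmul₂, LinearMap.comp_apply, TensorProduct.map_tmul,
    TensorProduct.homTensorHomMap_apply, TensorProduct.map_tmul]

lemma deltaComp_tmul_one [FiniteDimensional K H] {ι : Type} [Fintype ι] [DecidableEq ι]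
    (b : Module.Basis ι K H) (c e : H →ₗ[K] H) (hc : c 1 = 1) (he : e 1 = 1)
    (p : Module.Dual K H) :
    deltaComp K c e (p ⊗ₜ[K] (1 : H))
      = ∑ j, ∑ k, p (b j * b k) •
          ((b.coord k ⊗ₜ[K] (1 : H)) ⊗ₜ[K] (b.coord j ⊗ₜ[K] (1 : H))) := by
  have h1 : Coalgebra.comul (R := K) (1 : H) = (1 : H) ⊗ₜ[K] (1 : H) := by
    rw [Bialgebra.comul_one, Algebra.TensorProduct.one_def]
  rw [deltaComp, LinearMap.comp_apply, TensorProduct.map_tmul, LinearMap.comp_apply,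
    LinearMap.comp_apply, h1, TensorProduct.map_tmul, hc, he, dcomul_eq b p, map_sum]
  simp only [map_sum, map_smul, TensorProduct.comm_tmul]
  rw [TensorProduct.sum_tmul]
  rw [map_sum]
  refine Finset.sum_congr rfl fun j _ => ?_
  rw [TensorProduct.sum_tmul, map_sum]
  refine Finset.sum_congr rfl fun k _ => ?_
  rw [← TensorProduct.smul_tmul', map_smul]
  congr 1

end DCPAux


/-- `(id ⊗ Δ_{(γ,δ),(μ,ν)})(R_{(α,β),(γ,δ)*(μ,ν)}) = (R_{(α,β),(μ,ν)})₁₃ (R_{(α,β),(γ,δ)})₁₂`. -/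
theorem stmt15 (K H : Type) [Field K] [Ring H] [HopfAlgebra K H] [FiniteDimensional K H]
    (Sinv : H →ₗ[K] H)
    (hS1 : Sinv ∘ₗ HopfAlgebra.antipode (R := K) (A := H) = LinearMap.id)
    (hS2 : HopfAlgebra.antipode (R := K) (A := H) ∘ₗ Sinv = LinearMap.id)
    (α β γ δ μ ν : H ≃ₗ[K] H)
    (hα : DCP.IsHopfAut K α)
    (hβ : DCP.IsHopfAut K β)
    (hγ : DCP.IsHopfAut K γ)
    (hδ : DCP.IsHopfAut K δ)
    (hμ : DCP.IsHopfAut K μ)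
    (hν : DCP.IsHopfAut K ν)
    (Ma : Module.Dual K H ⊗[K] H →ₗ[K] Module.Dual K H ⊗[K] H →ₗ[K] Module.Dual K H ⊗[K] H)
    (hMa : ∀ (p : Module.Dual K H) (h : H) (q : Module.Dual K H) (l : H),
      Ma (p ⊗ₜ[K] h) (q ⊗ₜ[K] l) = DCP.dprod K (α.toLinearMap) (β.toLinearMap) Sinv p h q l)
    (Mc : Module.Dual K H ⊗[K] H →ₗ[K] Module.Dual K H ⊗[K] H →ₗ[K] Module.Dual K H ⊗[K] H)
    (hMc : ∀ (p : Module.Dual K H) (h : H) (q : Module.Dual K H) (l : H),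
      Mc (p ⊗ₜ[K] h) (q ⊗ₜ[K] l) = DCP.dprod K (γ.toLinearMap) (δ.toLinearMap) Sinv p h q l)
    (Mm : Module.Dual K H ⊗[K] H →ₗ[K] Module.Dual K H ⊗[K] H →ₗ[K] Module.Dual K H ⊗[K] H)
    (hMm : ∀ (p : Module.Dual K H) (h : H) (q : Module.Dual K H) (l : H),
      Mm (p ⊗ₜ[K] h) (q ⊗ₜ[K] l) = DCP.dprod K (μ.toLinearMap) (ν.toLinearMap) Sinv p h q l)
    (ι : Type) [Fintype ι] [DecidableEq ι] (b : Module.Basis ι K H) :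
    LinearMap.lTensor (Module.Dual K H ⊗[K] H)
        (DCP.deltaComp K μ.toLinearMap
          (μ.symm.toLinearMap ∘ₗ δ.toLinearMap ∘ₗ μ.toLinearMap))
        (∑ i, ((Coalgebra.counit : Module.Dual K H) ⊗ₜ[K] β.symm (b i)) ⊗ₜ[K]
          (b.coord i ⊗ₜ[K] (1 : H)))
    = DCP.tmul₂ K Ma (DCP.tmul₂ K Mc Mm)
        (∑ i, ((Coalgebra.counit : Module.Dual K H) ⊗ₜ[K] β.symm (b i)) ⊗ₜ[K]
          (((Coalgebra.counit : Module.Dual K H) ⊗ₜ[K] (1 : H)) ⊗ₜ[K]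
            (b.coord i ⊗ₜ[K] (1 : H))))
        (∑ j, ((Coalgebra.counit : Module.Dual K H) ⊗ₜ[K] β.symm (b j)) ⊗ₜ[K]
          ((b.coord j ⊗ₜ[K] (1 : H)) ⊗ₜ[K]
            ((Coalgebra.counit : Module.Dual K H) ⊗ₜ[K] (1 : H)))) := by
  classical
  have hεα := hα.2.2.2
  have hεβ := hβ.2.2.2
  have hβmul : ∀ x y : H, β.symm x * β.symm y = β.symm (x * y) := by
    intro x y
    apply β.injective
    rw [hβ.1, LinearEquiv.apply_symm_apply, LinearEquiv.apply_symm_apply,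
      LinearEquiv.apply_symm_apply]
  have hμ1 : μ.toLinearMap (1 : H) = 1 := hμ.2.1
  have he1 : (μ.symm.toLinearMap ∘ₗ δ.toLinearMap ∘ₗ μ.toLinearMap) (1 : H) = 1 := by
    have h1 : μ.symm (1 : H) = 1 := by
      apply μ.injective; rw [LinearEquiv.apply_symm_apply, hμ.2.1]
    simp only [LinearMap.comp_apply, LinearEquiv.coe_coe, hμ.2.1, hδ.2.1, h1]
  trans (∑ j : ι, ∑ k : ι,
      ((Coalgebra.counit : Module.Dual K H) ⊗ₜ[K] β.symm (b j * b k)) ⊗ₜ[K]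
        ((b.coord k ⊗ₜ[K] (1 : H)) ⊗ₜ[K] (b.coord j ⊗ₜ[K] (1 : H))))
  · -- LHS to canonical
    rw [map_sum]
    simp only [LinearMap.lTensor_tmul]
    rw [Finset.sum_congr rfl fun i _ => by
      rw [DCPAux.deltaComp_tmul_one b μ.toLinearMap
        (μ.symm.toLinearMap ∘ₗ δ.toLinearMap ∘ₗ μ.toLinearMap) hμ1 he1 (b.coord i)]]
    simp only [TensorProduct.tmul_sum, TensorProduct.tmul_smul]
    rw [Finset.sum_comm]
    refine Finset.sum_congr rfl fun j _ => ?_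
    rw [Finset.sum_comm]
    refine Finset.sum_congr rfl fun k _ => ?_
    simp only [TensorProduct.smul_tmul', ← TensorProduct.sum_tmul]
    congr 1
    simp only [TensorProduct.smul_tmul, ← TensorProduct.tmul_sum]
    congr 1
    have hterm : ∀ i : ι, (b.coord i) (b j * b k) • β.symm (b i)
        = β.symm ((b.repr (b j * b k)) i • b i) := by
      intro i; rw [map_smul, Module.Basis.coord_apply]
    rw [Finset.sum_congr rfl fun i _ => hterm i, ← map_sum, b.sum_repr (b j * b k)]
  · -- canonical = RHS
    symm
    rw [map_sum]
    rw [Finset.sum_congr rfl fun x _ => by rw [map_sum, LinearMap.sum_apply]]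
    rw [Finset.sum_comm]
    refine Finset.sum_congr rfl fun i _ => Finset.sum_congr rfl fun j _ => ?_
    rw [DCPAux.tmul₂_tmul, DCPAux.tmul₂_tmul, hMa, hMc, hMm,
      DCPAux.dprodA α β Sinv hS2 hεα hεβ, DCPAux.dprodB γ δ Sinv hS1 hδ.2.1 hγ.2.1,
      DCPAux.dprodC μ ν Sinv hS1 hν.2.1 hμ.2.1, hβmul]
end
end

section
/- Let H be a group and let the diagonal crossed product K(H) ⋈ KH_(α,β) have multiplication (δ_p ⋈ g)(δ_q ⋈ h) = δ_p δ_{βgβ⁻¹ q αg⁻¹α⁻¹} ⋈ gh, for conjugation automorphisms α, β ∈ H. Then the map S_(α,β)(δ_p ⋈ h) = δ_{αh⁻¹α⁻¹ p⁻¹ βhβ⁻¹} ⋈ αβh⁻¹β⁻¹α⁻¹, from K(H) ⋈ KH_(α,β) to K(H) ⋈ KH_{(α⁻¹, αβ⁻¹α⁻¹)}, is an algebra anti-homomorphism. -/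
open TensorProduct LinearMap

noncomputable def dp {K H : Type} [Field K] [Group H] [DecidableEq H] (α β : H)
    (x y : (H × H) →₀ K) : (H × H) →₀ K :=
  x.sum fun pg c => y.sum fun qh d =>
    if pg.1 = β * pg.2 * β⁻¹ * qh.1 * α * pg.2⁻¹ * α⁻¹ then
      Finsupp.single (pg.1, pg.2 * qh.2) (c * d)
    else 0

noncomputable def sm {K H : Type} [Field K] [Group H] [DecidableEq H] (α β : H)
    (x : (H × H) →₀ K) : (H × H) →₀ K :=
  x.sum fun ph c =>
    Finsupp.single (α * ph.2⁻¹ * α⁻¹ * ph.1⁻¹ * β * ph.2 * β⁻¹,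
      α * β * ph.2⁻¹ * β⁻¹ * α⁻¹) c

variable {K H : Type} [Field K] [Group H] [DecidableEq H]

lemma sm_zero (α β : H) : sm α β (0 : (H × H) →₀ K) = 0 := by simp [sm]

lemma sm_add (α β : H) (x y : (H × H) →₀ K) :
    sm α β (x + y) = sm α β x + sm α β y := by
  unfold sm
  exact Finsupp.sum_add_index (by simp) (by intros; simp [Finsupp.single_add])

lemma sm_single (α β : H) (p h : H) (c : K) :
    sm α β (Finsupp.single (p, h) c) =
      Finsupp.single (α * h⁻¹ * α⁻¹ * p⁻¹ * β * h * β⁻¹, α * β * h⁻¹ * β⁻¹ * α⁻¹) c := by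
  unfold sm
  rw [Finsupp.sum_single_index (by simp)]

lemma dp_zero_left (α β : H) (y : (H × H) →₀ K) : dp α β 0 y = 0 := by simp [dp]

lemma dp_zero_right (α β : H) (x : (H × H) →₀ K) : dp α β x 0 = 0 := by simp [dp]

lemma dp_add_left (α β : H) (x x' y : (H × H) →₀ K) :
    dp α β (x + x') y = dp α β x y + dp α β x' y := by
  unfold dp
  refine Finsupp.sum_add_index ?_ ?_
  · intros; simp
  · intro a _ b₁ b₂
    rw [← Finsupp.sum_add]
    congr 1; funext qh d
    split <;> simp [add_mul, Finsupp.single_add]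

lemma dp_add_right (α β : H) (x y y' : (H × H) →₀ K) :
    dp α β x (y + y') = dp α β x y + dp α β x y' := by
  unfold dp
  rw [← Finsupp.sum_add]
  congr 1; funext pg c
  refine Finsupp.sum_add_index ?_ ?_
  · intros; split <;> simp
  · intro a _ b₁ b₂
    split <;> simp [mul_add, Finsupp.single_add]

lemma dp_single_single (α β : H) (p g q h : H) (c d : K) :
    dp α β (Finsupp.single (p, g) c) (Finsupp.single (q, h) d) =
      if p = β * g * β⁻¹ * q * α * g⁻¹ * α⁻¹ then
        Finsupp.single (p, g * h) (c * d) else 0 := by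
  unfold dp
  rw [Finsupp.sum_single_index (by simp), Finsupp.sum_single_index (by split <;> simp)]

lemma key (α β p g q h : H) (c d : K) :
    sm α β (dp α β (Finsupp.single (p, g) c) (Finsupp.single (q, h) d)) =
      dp α⁻¹ (α * β⁻¹ * α⁻¹) (sm α β (Finsupp.single (q, h) d))
        (sm α β (Finsupp.single (p, g) c)) := by
  rw [sm_single, sm_single, dp_single_single, dp_single_single]
  by_cases hc : p = β * g * β⁻¹ * q * α * g⁻¹ * α⁻¹
  · subst hc
    rw [if_pos rfl, if_pos (by group), sm_single, mul_comm c d]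
    congr 1
    exact Prod.ext (by group) (by group)
  · rw [if_neg hc, if_neg, sm_zero]
    intro h2
    apply hc
    have h3 : (α * g * h * α⁻¹ * (α * h⁻¹ * α⁻¹ * q⁻¹ * β * h * β⁻¹) * (β * h⁻¹ * g⁻¹ * β⁻¹))⁻¹
        = (α * g * h * α⁻¹ * ((α * β⁻¹ * α⁻¹) * (α * β * h⁻¹ * β⁻¹ * α⁻¹) * (α * β⁻¹ * α⁻¹)⁻¹ *
          (α * g⁻¹ * α⁻¹ * p⁻¹ * β * g * β⁻¹) * α⁻¹ * (α * β * h⁻¹ * β⁻¹ * α⁻¹)⁻¹ * α⁻¹⁻¹) *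
          (β * h⁻¹ * g⁻¹ * β⁻¹))⁻¹ := by rw [h2]
    calc p = (α * g * h * α⁻¹ * ((α * β⁻¹ * α⁻¹) * (α * β * h⁻¹ * β⁻¹ * α⁻¹) * (α * β⁻¹ * α⁻¹)⁻¹ *
          (α * g⁻¹ * α⁻¹ * p⁻¹ * β * g * β⁻¹) * α⁻¹ * (α * β * h⁻¹ * β⁻¹ * α⁻¹)⁻¹ * α⁻¹⁻¹) *
          (β * h⁻¹ * g⁻¹ * β⁻¹))⁻¹ := by group
      _ = (α * g * h * α⁻¹ * (α * h⁻¹ * α⁻¹ * q⁻¹ * β * h * β⁻¹) * (β * h⁻¹ * g⁻¹ * β⁻¹))⁻¹ :=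
          h3.symm
      _ = β * g * β⁻¹ * q * α * g⁻¹ * α⁻¹ := by group

lemma sm_dp_single_left (α β : H) (p : H × H) (c : K) (y : (H × H) →₀ K) :
    sm α β (dp α β (Finsupp.single p c) y) =
      dp α⁻¹ (α * β⁻¹ * α⁻¹) (sm α β y) (sm α β (Finsupp.single p c)) := by
  induction y using Finsupp.induction with
  | zero => simp [dp_zero_right, sm_zero, dp_zero_left]
  | single_add q d g _ _ ih =>
    rw [dp_add_right, sm_add, sm_add, dp_add_left, ih]
    congr 1
    exact key α β p.1 p.2 q.1 q.2 c d

/-- `S_(α,β)` is an algebra anti-homomorphism from `K(H) ⋈ KH_(α,β)` to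
`K(H) ⋈ KH_(α⁻¹, αβ⁻¹α⁻¹)`. -/
theorem stmt19 (K H : Type) [Field K] [Group H] [DecidableEq H] (α β : H) :
    ∀ x y : (H × H) →₀ K,
      sm α β (dp α β x y) = dp α⁻¹ (α * β⁻¹ * α⁻¹) (sm α β y) (sm α β x) := by
  intro x y
  induction x using Finsupp.induction with
  | zero => simp [dp_zero_left, sm_zero, dp_zero_right]
  | single_add p c f _ _ ih =>
    rw [dp_add_left, sm_add, sm_add, dp_add_right, ih, sm_dp_single_left]
end
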